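/- Let F be a field of characteristic zero, p_1, …, p_t pairwise distinct primes, c_1, …, c_t nonnegative integers, and μ = p_1^{c_1} ⋯ p_t^{c_t}. Then there is an F-algebra isomorphism Γ from the quotient of the multivariate polynomial ring F[x_1, …, x_t] by the ideal generated by Φ_{p_1^{c_1}}(x_1), …, Φ_{p_t^{c_t}}(x_t) to F[z]/⟨Φ_μ(z)⟩, which sends the class of the product x_1 x_2 ⋯ x_t to the class of z. -/

import Mathlib

open Polynomial

private lemma modEq_prod_aux {t : ℕ} (a b : ℕ) (n : Fin t → ℕ)
    (hco : ∀ i j, i ≠ j → Nat.Coprime (n i) (n j))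
    (h : ∀ i, a ≡ b [MOD n i]) : a ≡ b [MOD ∏ i, n i] := by
  classical
  have : ∀ s : Finset (Fin t), a ≡ b [MOD ∏ i ∈ s, n i] := by
    intro s
    induction s using Finset.induction_on with
    | empty => simpa using Nat.modEq_one
    | @insert i s his ih =>
      rw [Finset.prod_insert his]
      refine (Nat.modEq_and_modEq_iff_modEq_mul ?_).mp ⟨h i, ih⟩
      exact Nat.Coprime.prod_right fun j hj => hco i j (by rintro rfl; exact his hj)
  exact this Finset.univ

private lemma totient_prod_aux {t : ℕ} (n : Fin t → ℕ)
    (hco : ∀ i j, i ≠ j → Nat.Coprime (n i) (n j)) :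
    Nat.totient (∏ i, n i) = ∏ i, Nat.totient (n i) := by
  classical
  have : ∀ s : Finset (Fin t), Nat.totient (∏ i ∈ s, n i) = ∏ i ∈ s, Nat.totient (n i) := by
    intro s
    induction s using Finset.induction_on with
    | empty => simp
    | @insert i s his ih =>
      rw [Finset.prod_insert his, Finset.prod_insert his, Nat.totient_mul, ih]
      exact Nat.Coprime.prod_right fun j hj => hco i j (by rintro rfl; exact his hj)
  exact this Finset.univ

private lemma span_monomials_top (F : Type*) [Field F] (t : ℕ) (g : Fin t → Polynomial F)
    (hmon : ∀ i, (g i).Monic) (hdeg : ∀ i, 0 < (g i).natDegree) :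
    (⊤ : Submodule F (MvPolynomial (Fin t) F ⧸
        Ideal.span (Set.range fun i : Fin t => Polynomial.aeval (MvPolynomial.X (R := F) i) (g i)))) ≤
    Submodule.span F (Set.range fun a : (∀ i : Fin t, Fin ((g i).natDegree)) =>
      Ideal.Quotient.mk _ (MvPolynomial.monomial
        (Finsupp.equivFunOnFinite.symm fun i => (a i : ℕ)) (1 : F))) := by
  classical
  set I := Ideal.span (Set.range fun i : Fin t => Polynomial.aeval (MvPolynomial.X i : MvPolynomial (Fin t) F) (g i)) with hI
  set d : Fin t → ℕ := fun i => (g i).natDegree with hd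
  set S := Submodule.span F (Set.range fun a : (∀ i : Fin t, Fin (d i)) =>
      Ideal.Quotient.mk I (MvPolynomial.monomial
        (Finsupp.equivFunOnFinite.symm fun i => (a i : ℕ)) (1 : F))) with hS
  have hsmul : ∀ (cc : F) (f : MvPolynomial (Fin t) F),
      Ideal.Quotient.mk I (cc • f) = cc • Ideal.Quotient.mk I f := by
    intro cc f
    exact map_smul (Ideal.Quotient.mkₐ F I) cc f
  have key : ∀ n (m : (Fin t) →₀ ℕ), (m.sum fun _ k => k) = n →
      Ideal.Quotient.mk I (MvPolynomial.monomial m (1 : F)) ∈ S := by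
    intro n
    induction n using Nat.strong_induction_on with
    | _ n ih =>
      intro m hm
      by_cases hlt : ∀ i, m i < d i
      · refine Submodule.subset_span ⟨fun i => ⟨m i, hlt i⟩, ?_⟩
        simp only []
        congr 1
        have : (fun i => ((⟨m i, hlt i⟩ : Fin (d i)) : ℕ)) = ⇑m := rfl
        rw [this, Finsupp.equivFunOnFinite_symm_coe]
      · push_neg at hlt
        obtain ⟨i, hi⟩ := hlt
        set m' := m - Finsupp.single i (d i) with hm'def
        have hle : Finsupp.single i (d i) ≤ m := by
          rw [Finsupp.single_le_iff]; exact hi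
        have hmm : m' + Finsupp.single i (d i) = m := tsub_add_cancel_of_le hle
        -- the reduction polynomial
        set r : Polynomial F := X ^ (d i) - g i with hr
        have hrdeg : r.natDegree < d i := by
          rcases eq_or_ne r 0 with h0 | h0
          · rw [h0]; simpa using hdeg i
          · rw [Polynomial.natDegree_lt_iff_degree_lt h0]
            have : r.degree < (X ^ (d i) : Polynomial F).degree := by
              apply Polynomial.degree_sub_lt
              · rw [Polynomial.degree_X_pow, Polynomial.degree_eq_natDegree (hmon i).ne_zero]
              · exact pow_ne_zero _ Polynomial.X_ne_zero
              · simp [Polynomial.leadingCoeff_X_pow, (hmon i).leadingCoeff]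
            simpa [Polynomial.degree_X_pow] using this
        have hg0 : Ideal.Quotient.mk I (Polynomial.aeval (MvPolynomial.X i) (g i)) = 0 := by
          rw [Ideal.Quotient.eq_zero_iff_mem]
          exact Ideal.subset_span ⟨i, rfl⟩
        have step1 : Ideal.Quotient.mk I (MvPolynomial.monomial m (1 : F)) =
            Ideal.Quotient.mk I (MvPolynomial.monomial m' (1 : F) *
              Polynomial.aeval (MvPolynomial.X i) r) := by
          have e1 : MvPolynomial.monomial m (1 : F) =
              MvPolynomial.monomial m' (1 : F) * MvPolynomial.X i ^ (d i) := by
            rw [MvPolynomial.X_pow_eq_monomial, MvPolynomial.monomial_mul, hmm, mul_one]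
          rw [e1, hr, map_sub, map_mul, map_mul, map_sub]
          rw [Polynomial.aeval_X_pow, map_pow]
          rw [hg0, sub_zero]
        rw [step1]
        have expand : Polynomial.aeval (MvPolynomial.X i : MvPolynomial (Fin t) F) r =
            ∑ j ∈ Finset.range (d i), r.coeff j • (MvPolynomial.X i : MvPolynomial (Fin t) F) ^ j :=
          Polynomial.aeval_eq_sum_range' hrdeg _
        rw [expand, Finset.mul_sum, map_sum]
        apply Submodule.sum_mem
        intro j hj
        rw [Finset.mem_range] at hj
        have e2 : MvPolynomial.monomial m' (1 : F) * r.coeff j • (MvPolynomial.X i) ^ j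
            = r.coeff j • MvPolynomial.monomial (m' + Finsupp.single i j) (1 : F) := by
          rw [MvPolynomial.X_pow_eq_monomial, mul_smul_comm, MvPolynomial.monomial_mul, mul_one]
        rw [e2, hsmul]
        apply Submodule.smul_mem
        -- degree bookkeeping
        have hsum : ((m' + Finsupp.single i j).sum fun _ k => k) < n := by
          have h1 : ((m' + Finsupp.single i j).sum fun _ k => k)
              = (m'.sum fun _ k => k) + j := by
            rw [Finsupp.sum_add_index' (fun _ => rfl) (fun _ _ _ => rfl)]
            rw [Finsupp.sum_single_index rfl]
          have h2 : (m.sum fun _ k => k) = (m'.sum fun _ k => k) + d i := by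
            rw [← hmm, Finsupp.sum_add_index' (fun _ => rfl) (fun _ _ _ => rfl),
              Finsupp.sum_single_index rfl]
          omega
        exact ih _ hsum _ rfl
  -- now the general statement
  intro x _
  obtain ⟨f, rfl⟩ := Ideal.Quotient.mk_surjective x
  rw [f.as_sum, map_sum]
  apply Submodule.sum_mem
  intro m hmem
  have : MvPolynomial.monomial m (MvPolynomial.coeff m f)
      = (MvPolynomial.coeff m f) • MvPolynomial.monomial m (1 : F) := by
    rw [MvPolynomial.smul_monomial, smul_eq_mul, mul_one]
  rw [this, hsmul]
  exact Submodule.smul_mem _ _ (key _ m rfl)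

private lemma root_pow_eq (F : Type*) [Field F] (μ : ℕ) (hμ : 0 < μ) (s : ℕ)
    (hs : s ≡ 1 [MOD μ]) :
    (AdjoinRoot.root (cyclotomic μ F)) ^ s = AdjoinRoot.root (cyclotomic μ F) := by
  have h1 : (AdjoinRoot.root (cyclotomic μ F)) ^ μ = 1 := by
    have hd : cyclotomic μ F ∣ X ^ μ - 1 := cyclotomic.dvd_X_pow_sub_one μ F
    have h2 := AdjoinRoot.mk_eq_zero.mpr hd
    have h3 : (AdjoinRoot.root (cyclotomic μ F)) ^ μ - 1 = 0 := by
      simpa [map_sub, map_pow, map_one] using h2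
    linear_combination h3
  rcases eq_or_lt_of_le (show 1 ≤ μ from hμ) with h1' | h1'
  · have : μ = 1 := h1'.symm
    subst this
    have hr : (AdjoinRoot.root (cyclotomic 1 F)) = 1 := by simpa using h1
    rw [hr, one_pow]
  · have hmod : s % μ = 1 := by
      have h4 : s % μ = 1 % μ := hs
      rwa [Nat.mod_eq_of_lt h1'] at h4
    conv_rhs => rw [← pow_one (AdjoinRoot.root (cyclotomic μ F))]
    calc (AdjoinRoot.root (cyclotomic μ F)) ^ s
        = (AdjoinRoot.root (cyclotomic μ F)) ^ (μ * (s / μ) + s % μ) := by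
          rw [Nat.div_add_mod]
      _ = ((AdjoinRoot.root (cyclotomic μ F)) ^ μ) ^ (s / μ) *
            (AdjoinRoot.root (cyclotomic μ F)) ^ (s % μ) := by
          rw [pow_add, pow_mul]
      _ = (AdjoinRoot.root (cyclotomic μ F)) ^ 1 := by rw [h1, one_pow, one_mul, hmod]

private theorem main_aux (F : Type*) [Field F] [CharZero F] (t : ℕ)
    (q : Fin t → ℕ) (hq0 : ∀ i, 0 < q i)
    (hco : ∀ i j, i ≠ j → Nat.Coprime (q i) (q j)) :
    ∃ Γ : (MvPolynomial (Fin t) F ⧸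
          Ideal.span (Set.range fun i : Fin t =>
            Polynomial.aeval (MvPolynomial.X (R := F) i) (cyclotomic (q i) F)))
        ≃ₐ[F] AdjoinRoot (cyclotomic (∏ i : Fin t, q i) F),
      Γ (Ideal.Quotient.mk _ (∏ i : Fin t, MvPolynomial.X i)) =
        AdjoinRoot.root (cyclotomic (∏ i : Fin t, q i) F) := by
  classical
  set μ : ℕ := ∏ i : Fin t, q i with hμdef
  have hμ : 0 < μ := Finset.prod_pos fun i _ => hq0 i
  set P : Fin t → ℕ := fun i => ∏ j ∈ Finset.univ.erase i, q j with hP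
  have hPq : ∀ i, P i * q i = μ := fun i =>
    Finset.prod_erase_mul _ _ (Finset.mem_univ i)
  have hPco : ∀ i, Nat.Coprime (P i) (q i) := by
    intro i
    apply Nat.Coprime.prod_left
    intro j hj
    exact hco j i (Finset.ne_of_mem_erase hj)
  -- choose CRT-style exponents
  have hb : ∀ i, ∃ bb : ℕ, P i * bb ≡ 1 [MOD q i] ∧ Nat.Coprime bb (q i) := by
    intro i
    rcases eq_or_lt_of_le (show 1 ≤ q i from hq0 i) with h1 | h1
    · exact ⟨1, by simp [← h1, Nat.modEq_one], by simp [← h1, Nat.coprime_one_right]⟩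
    · obtain ⟨bb, -, hbb⟩ := Nat.exists_mul_mod_eq_one_of_coprime (hPco i) h1
      refine ⟨bb, ?_, ?_⟩
      · show (P i * bb) % q i = 1 % q i
        rw [hbb, Nat.one_mod_eq_one.mpr (by omega)]
      · haveI : NeZero (q i) := ⟨by omega⟩
        have hcast : ((bb : ZMod (q i)) * (P i : ZMod (q i))) = 1 := by
          have : ((P i * bb : ℕ) : ZMod (q i)) = ((1 : ℕ) : ZMod (q i)) :=
            (ZMod.natCast_eq_natCast_iff _ _ _).mpr (by
              show (P i * bb) % q i = 1 % q i
              rw [hbb, Nat.one_mod_eq_one.mpr (by omega)])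
          push_cast at this
          rw [mul_comm] at this
          simpa using this
        have : IsUnit ((bb : ℕ) : ZMod (q i)) := IsUnit.of_mul_eq_one _ hcast
        exact (ZMod.isUnit_iff_coprime bb (q i)).mp this
  choose b hb1 hb2 using hb
  set e : Fin t → ℕ := fun i => P i * b i with he
  have he1 : ∀ i, e i ≡ 1 [MOD q i] := hb1
  have he0 : ∀ i j, j ≠ i → q j ∣ e i := by
    intro i j hij
    exact Dvd.dvd.mul_right (Finset.dvd_prod_of_mem q
      (Finset.mem_erase.mpr ⟨hij, Finset.mem_univ j⟩)) _
  -- the primitive root facts over ℚ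
  have hdvd : ∀ i, cyclotomic μ F ∣ (cyclotomic (q i) F).comp (X ^ e i) := by
    intro i
    set ν : ℕ+ := ⟨μ, hμ⟩ with hν
    set K := CyclotomicField μ ℚ with hK
    haveI : NeZero ((μ : ℕ) : ℚ) := ⟨Nat.cast_ne_zero.mpr hμ.ne'⟩
    haveI : NeZero μ := ⟨hμ.ne'⟩
    haveI : IsCyclotomicExtension {μ} ℚ K := CyclotomicField.isCyclotomicExtension μ ℚ
    set ζ : K := IsCyclotomicExtension.zeta μ ℚ K with hζdef
    have hζ : IsPrimitiveRoot ζ μ := IsCyclotomicExtension.zeta_spec μ ℚ K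
    have hprim : IsPrimitiveRoot (ζ ^ e i) (q i) := by
      have h1 : IsPrimitiveRoot (ζ ^ P i) (q i) := hζ.pow hμ (hPq i).symm
      have h2 := h1.pow_of_coprime (b i) (hb2 i)
      rwa [← pow_mul] at h2
    have hrat : cyclotomic μ ℚ ∣ (cyclotomic (q i) ℚ).comp (X ^ e i) := by
      rw [cyclotomic_eq_minpoly_rat hζ hμ]
      apply minpoly.dvd
      rw [Polynomial.aeval_comp, map_pow, Polynomial.aeval_X]
      rw [Polynomial.aeval_def, ← Polynomial.eval_map, map_cyclotomic]
      exact hprim.isRoot_cyclotomic (hq0 i)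
    have := _root_.map_dvd (Polynomial.mapRingHom (algebraMap ℚ F)) hrat
    simpa [Polynomial.coe_mapRingHom, Polynomial.map_comp, map_cyclotomic,
      Polynomial.map_pow, Polynomial.map_X] using this
  -- the algebra map
  set v : Fin t → AdjoinRoot (cyclotomic μ F) :=
    fun i => (AdjoinRoot.root (cyclotomic μ F)) ^ e i with hv
  have hv0 : ∀ i, Polynomial.aeval (v i) (cyclotomic (q i) F) = 0 := by
    intro i
    have h1 : Polynomial.aeval (AdjoinRoot.root (cyclotomic μ F))
        ((cyclotomic (q i) F).comp (X ^ e i)) = 0 := by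
      rw [AdjoinRoot.aeval_eq, AdjoinRoot.mk_eq_zero]
      exact hdvd i
    rw [Polynomial.aeval_comp, map_pow, Polynomial.aeval_X] at h1
    exact h1
  set φ0 : MvPolynomial (Fin t) F →ₐ[F] AdjoinRoot (cyclotomic μ F) :=
    MvPolynomial.aeval v with hφ0
  set I := Ideal.span (Set.range fun i : Fin t =>
      Polynomial.aeval (MvPolynomial.X i : MvPolynomial (Fin t) F) (cyclotomic (q i) F)) with hI
  have hker : ∀ a ∈ I, φ0 a = 0 := by
    intro a ha
    have hle : I ≤ RingHom.ker φ0.toRingHom := by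
      rw [hI, Ideal.span_le]
      rintro _ ⟨i, rfl⟩
      rw [SetLike.mem_coe, RingHom.mem_ker]
      show φ0 (Polynomial.aeval (MvPolynomial.X i) (cyclotomic (q i) F)) = 0
      rw [← Polynomial.aeval_algHom_apply]
      have hx : φ0 (MvPolynomial.X i) = v i := by rw [hφ0]; exact MvPolynomial.aeval_X v i
      rw [hx]; exact hv0 i
    exact hle ha
  set φ : (MvPolynomial (Fin t) F ⧸ I) →ₐ[F] AdjoinRoot (cyclotomic μ F) :=
    Ideal.Quotient.liftₐ I φ0 hker with hφ
  -- value on the product of variables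
  have hsum1 : (∑ i : Fin t, e i) ≡ 1 [MOD μ] := by
    apply modEq_prod_aux _ _ _ hco
    intro j
    have h1 : (∑ i : Fin t, e i) = e j + ∑ i ∈ Finset.univ.erase j, e i := by
      rw [Finset.add_sum_erase _ _ (Finset.mem_univ j)]
    rw [h1]
    have h2 : (∑ i ∈ Finset.univ.erase j, e i) ≡ 0 [MOD q j] := by
      rw [Nat.modEq_zero_iff_dvd]
      apply Finset.dvd_sum
      intro i hi
      exact he0 i j (Finset.ne_of_mem_erase hi).symm
    simpa using (he1 j).add h2
  have hroot : φ (Ideal.Quotient.mk I (∏ i : Fin t, MvPolynomial.X i)) =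
      AdjoinRoot.root (cyclotomic μ F) := by
    have h1 : φ (Ideal.Quotient.mk I (∏ i : Fin t, MvPolynomial.X i))
        = φ0 (∏ i : Fin t, MvPolynomial.X i) := rfl
    rw [h1, map_prod]
    have h2 : ∀ i, φ0 (MvPolynomial.X i) = (AdjoinRoot.root (cyclotomic μ F)) ^ e i := by
      intro i; rw [hφ0]; simp [hv]
    calc (∏ i : Fin t, φ0 (MvPolynomial.X i))
        = ∏ i : Fin t, (AdjoinRoot.root (cyclotomic μ F)) ^ e i := by
          exact Finset.prod_congr rfl fun i _ => h2 i
      _ = (AdjoinRoot.root (cyclotomic μ F)) ^ (∑ i : Fin t, e i) := by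
          rw [Finset.prod_pow_eq_pow_sum]
      _ = AdjoinRoot.root (cyclotomic μ F) := root_pow_eq F μ hμ _ hsum1
  -- surjectivity
  have hsurj : Function.Surjective φ := by
    rw [← AlgHom.range_eq_top, ← top_le_iff, ← AdjoinRoot.adjoinRoot_eq_top,
      Algebra.adjoin_le_iff]
    intro x hx
    rw [Set.mem_singleton_iff] at hx
    subst hx
    exact ⟨Ideal.Quotient.mk I (∏ i : Fin t, MvPolynomial.X i), hroot⟩
  -- dimension counting
  have hcycmon : ∀ i, (cyclotomic (q i) F).Monic := fun i => cyclotomic.monic _ _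
  have hdeg0 : ∀ i, 0 < (cyclotomic (q i) F).natDegree := by
    intro i
    rw [natDegree_cyclotomic]
    exact Nat.totient_pos.mpr (hq0 i)
  have hspan := span_monomials_top F t (fun i => cyclotomic (q i) F) hcycmon hdeg0
  have hspan' : (Submodule.span F (Set.range
      fun a : (∀ i : Fin t, Fin ((cyclotomic (q i) F).natDegree)) =>
      Ideal.Quotient.mk I (MvPolynomial.monomial
        (Finsupp.equivFunOnFinite.symm fun i => (a i : ℕ)) (1 : F)))) = ⊤ :=
    le_antisymm le_top hspan
  haveI hfinQ : Module.Finite F (MvPolynomial (Fin t) F ⧸ I) :=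
    Module.finite_def.mpr (Submodule.fg_def.mpr ⟨_, Set.finite_range _, hspan'⟩)
  have hcard : Fintype.card (∀ i : Fin t, Fin ((cyclotomic (q i) F).natDegree))
      = Nat.totient μ := by
    rw [Fintype.card_pi]
    rw [hμdef, totient_prod_aux q hco]
    exact Finset.prod_congr rfl fun i _ => by rw [Fintype.card_fin, natDegree_cyclotomic]
  have hfr1 : Module.finrank F (MvPolynomial (Fin t) F ⧸ I) ≤ Nat.totient μ := by
    have h1 : Module.finrank F (MvPolynomial (Fin t) F ⧸ I)
        = Module.finrank F (⊤ : Submodule F (MvPolynomial (Fin t) F ⧸ I)) :=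
      (finrank_top F _).symm
    rw [h1, ← hspan']
    refine le_trans (finrank_span_le_card _) ?_
    rw [Set.toFinset_range]
    exact le_trans Finset.card_image_le (by rw [Finset.card_univ, hcard])
  have hcycne : (cyclotomic μ F) ≠ 0 := cyclotomic_ne_zero μ F
  haveI : Module.Finite F (AdjoinRoot (cyclotomic μ F)) :=
    (AdjoinRoot.powerBasis hcycne).finite
  have hfr2 : Module.finrank F (AdjoinRoot (cyclotomic μ F)) = Nat.totient μ := by
    rw [(AdjoinRoot.powerBasis hcycne).finrank]
    show (cyclotomic μ F).natDegree = _
    rw [natDegree_cyclotomic]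
  have hfr3 : Module.finrank F (AdjoinRoot (cyclotomic μ F)) ≤
      Module.finrank F (MvPolynomial (Fin t) F ⧸ I) := by
    have h1 := LinearMap.finrank_range_le φ.toLinearMap
    have h2 : LinearMap.range φ.toLinearMap = ⊤ := LinearMap.range_eq_top.mpr hsurj
    rwa [h2, finrank_top] at h1
  have heq : Module.finrank F (MvPolynomial (Fin t) F ⧸ I)
      = Module.finrank F (AdjoinRoot (cyclotomic μ F)) := le_antisymm (by omega) hfr3
  have hinj : Function.Injective φ :=
    (LinearMap.injective_iff_surjective_of_finrank_eq_finrank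
      (f := φ.toLinearMap) heq).mpr hsurj
  exact ⟨AlgEquiv.ofBijective φ ⟨hinj, hsurj⟩, hroot⟩

/-- for pairwise distinct primes p_i and exponents c_i with
μ = ∏ p_i^{c_i}, there is an F-algebra isomorphism
F[x_1,…,x_t]/⟨Φ_{p_1^{c_1}}(x_1),…,Φ_{p_t^{c_t}}(x_t)⟩ ≃ F[z]/⟨Φ_μ⟩
sending the class of x_1⋯x_t to the class of z. -/
theorem multi_cyclotomic_equiv
    (F : Type*) [Field F] [CharZero F] (t : ℕ)
    (p : Fin t → ℕ) (c : Fin t → ℕ)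
    (hp : ∀ i, (p i).Prime) (hdist : Function.Injective p) :
    ∃ Γ : (MvPolynomial (Fin t) F ⧸
          Ideal.span (Set.range fun i : Fin t =>
            Polynomial.aeval (MvPolynomial.X (R := F) i) (cyclotomic (p i ^ c i) F)))
        ≃ₐ[F] AdjoinRoot (cyclotomic (∏ i : Fin t, p i ^ c i) F),
      Γ (Ideal.Quotient.mk _ (∏ i : Fin t, MvPolynomial.X i)) =
        AdjoinRoot.root (cyclotomic (∏ i : Fin t, p i ^ c i) F) := by
  exact main_aux F t (fun i => p i ^ c i) (fun i => pow_pos (hp i).pos (c i))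
    (fun i j hij => ((Nat.coprime_primes (hp i) (hp j)).mpr
      (fun h => hij (hdist h))).pow _ _)
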